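/- Let Ω ⊂ ℝ² be a bounded domain and Φ = φ + iψ holomorphic on a neighborhood of Ω̄ with only finitely many critical points, all nondegenerate. Then for every g ∈ L¹(Ω), ∫_Ω g(x) e^{τ(Φ(x) − Φ̄(x))} dx = ∫_Ω g(x) e^{2iτψ(x)} dx → 0 as τ → +∞. -/

import Mathlib

open MeasureTheory Filter Set Complex Real

/-- The real-linear derivative map of a holomorphic function. -/
noncomputable def fdc (Φ : ℂ → ℂ) (x : ℂ) : ℂ →L[ℝ] ℂ :=
  ContinuousLinearMap.restrictScalars ℝ ((1 : ℂ →L[ℂ] ℂ).smulRight (deriv Φ x))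

theorem det_fdc (Φ : ℂ → ℂ) (x : ℂ) : (fdc Φ x).det = Complex.normSq (deriv Φ x) := by
  rw [fdc, ContinuousLinearMap.det, ← LinearMap.det_toMatrix Complex.basisOneI,
    Matrix.det_fin_two]
  simp [LinearMap.toMatrix_apply, Complex.normSq_apply]

theorem exp_phase_norm (τ : ℝ) (w : ℂ) :
    ‖Complex.exp ((τ:ℂ) * (w - (starRingEnd ℂ) w))‖ = 1 := by
  rw [Complex.norm_exp, Complex.sub_conj]
  simp [Complex.mul_re]

/-- Riemann-Lebesgue for the phase `τ (w - conj w)` on `ℂ`. -/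
theorem rl_aux (H : ℂ → ℂ) :
    Tendsto (fun τ : ℝ => ∫ v, H v * Complex.exp ((τ : ℂ) * (v - (starRingEnd ℂ) v)))
      atTop (nhds 0) := by
  have hRL := tendsto_integral_exp_inner_smul_cocompact (V := ℂ) (f := H)
  have hw : Tendsto (fun τ : ℝ => (-(τ / π)) • Complex.I) atTop (cocompact ℂ) := by
    rw [← Metric.cobounded_eq_cocompact, ← tendsto_norm_atTop_iff_cobounded]
    have h1 : ∀ τ : ℝ, 0 ≤ τ → ‖(-(τ / π)) • Complex.I‖ = τ / π := by
      intro τ hτ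
      simp [norm_smul, abs_div, _root_.abs_of_nonneg hτ, _root_.abs_of_nonneg pi_pos.le]
    apply Tendsto.congr' ?_ (tendsto_id.atTop_div_const pi_pos)
    filter_upwards [eventually_ge_atTop (0:ℝ)] with τ hτ
    exact (h1 τ hτ).symm
  have h2 := hRL.comp hw
  refine h2.congr fun τ => ?_
  simp only [Function.comp_apply]
  congr 1
  ext v
  have hinner : (inner ℝ v ((-(τ / π)) • Complex.I) : ℝ) = -(τ/π) * v.im := by
    simp [real_inner_eq_re_inner (𝕜 := ℂ), RCLike.inner_apply]
  rw [hinner, Circle.smul_def, Real.fourierChar_apply]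
  rw [Complex.sub_conj]
  rw [smul_eq_mul, mul_comm]
  congr 1
  have hπ : (π : ℂ) ≠ 0 := Complex.ofReal_ne_zero.2 pi_ne_zero
  congr 1
  push_cast
  field_simp

/-- Local injectivity of a holomorphic function at a noncritical point. -/
theorem loc_inj (Φ : ℂ → ℂ) (x : ℂ) (h : AnalyticAt ℂ Φ x) (hx : deriv Φ x ≠ 0) :
    ∃ s : Set ℂ, IsOpen s ∧ x ∈ s ∧ Set.InjOn Φ s := by
  have hd : HasStrictDerivAt Φ (deriv Φ x) x := by
    obtain ⟨p, hp⟩ := h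
    have h1 := hp.hasStrictDerivAt
    have h2 : (p 1 fun _ => 1) = deriv Φ x := h1.hasDerivAt.deriv.symm
    rwa [h2] at h1
  have hfd : HasStrictFDerivAt Φ
      ((ContinuousLinearEquiv.unitsEquivAut ℂ (Units.mk0 _ hx) : ℂ ≃L[ℂ] ℂ) :
        ℂ →L[ℂ] ℂ) x := by
    have h1 := hd.hasStrictFDerivAt
    exact h1.congr_fderiv (by ext; simp)
  exact ⟨(hfd.toOpenPartialHomeomorph Φ).source, (hfd.toOpenPartialHomeomorph Φ).open_source,
    hfd.mem_toOpenPartialHomeomorph_source, by simpa using (hfd.toOpenPartialHomeomorph Φ).injOn⟩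

/-- Riemann–Lebesgue type lemma: for `Φ` holomorphic near the closure of a bounded
domain with finitely many, all nondegenerate, critical points, and `g ∈ L¹(Ω)`,
`∫_Ω g e^{τ(Φ - Φ̄)} dx → 0` as `τ → +∞`. -/
theorem stmt2 (Ω U : Set ℂ) (hΩ : Bornology.IsBounded Ω) (hU : IsOpen U)
    (hsub : closure Ω ⊆ U) (Φ : ℂ → ℂ) (hΦ : DifferentiableOn ℂ Φ U)
    (hfin : {z ∈ closure Ω | deriv Φ z = 0}.Finite)
    (hnd : ∀ z ∈ closure Ω, deriv Φ z = 0 → deriv (deriv Φ) z ≠ 0)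
    (g : ℂ → ℂ) (hg : IntegrableOn g Ω) :
    Tendsto (fun τ : ℝ =>
        ∫ x in Ω, g x * Complex.exp (τ * (Φ x - (starRingEnd ℂ) (Φ x))))
      atTop (nhds 0) := by
  classical
  set K := closure Ω with hK
  set C := {z ∈ K | deriv Φ z = 0} with hC
  have hΦan : AnalyticOnNhd ℂ Φ U := hΦ.analyticOnNhd hU
  have hderiv_cont : ContinuousOn (deriv Φ) U := (hΦan.deriv).continuousOn
  set V0 : Set ℂ := U ∩ (deriv Φ) ⁻¹' ({0}ᶜ) with hV0
  have hV0open : IsOpen V0 :=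
    hderiv_cont.isOpen_inter_preimage hU isOpen_compl_singleton
  have hV0U : V0 ⊆ U := inter_subset_left
  have hV0ne : ∀ x ∈ V0, deriv Φ x ≠ 0 := fun x hx => hx.2
  -- a countable cover of `K \ C` by injectivity neighbourhoods
  have hBex : ∀ z : ↥(K \ C), ∃ t : Set ℂ,
      IsOpen t ∧ (z : ℂ) ∈ t ∧ Set.InjOn Φ t ∧ t ⊆ V0 := by
    rintro ⟨z, hzK, hzC⟩
    have hzU : z ∈ U := hsub hzK
    have hzd : deriv Φ z ≠ 0 := fun h => hzC ⟨hzK, h⟩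
    obtain ⟨t, hto, hzt, hti⟩ := loc_inj Φ z (hΦan z hzU) hzd
    exact ⟨t ∩ V0, hto.inter hV0open, ⟨hzt, hzU, hzd⟩,
      hti.mono inter_subset_left, inter_subset_right⟩
  choose B hBo hBm hBi hBV using hBex
  have hB' : ∃ B' : ℕ → Set ℂ,
      (∀ n, IsOpen (B' n) ∧ Set.InjOn Φ (B' n) ∧ B' n ⊆ V0) ∧ K \ C ⊆ ⋃ n, B' n := by
    obtain ⟨T, hTc, hTeq⟩ := TopologicalSpace.isOpen_iUnion_countable B hBo
    have hcover : K \ C ⊆ ⋃ i ∈ T, B i := by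
      rw [hTeq]
      intro x hx
      exact mem_iUnion.2 ⟨⟨x, hx⟩, hBm ⟨x, hx⟩⟩
    rcases T.eq_empty_or_nonempty with rfl | hTne
    · exact ⟨fun _ => ∅, fun n => ⟨isOpen_empty, Set.injOn_empty _, empty_subset _⟩,
        by simpa using hcover⟩
    · obtain ⟨f, hf⟩ := hTc.exists_eq_range hTne
      refine ⟨fun n => B (f n), fun n => ⟨hBo (f n), hBi (f n), hBV (f n)⟩, ?_⟩
      rwa [hf, Set.biUnion_range] at hcover
  obtain ⟨B', hB'p, hB'cov⟩ := hB'
  -- measurable hull of Ω inside K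
  set Ω' : Set ℂ := toMeasurable volume Ω ∩ K with hΩ'def
  have hΩ'meas : MeasurableSet Ω' :=
    (measurableSet_toMeasurable _ _).inter isClosed_closure.measurableSet
  have hΩ'K : Ω' ⊆ K := inter_subset_right
  have hres : volume.restrict Ω' = volume.restrict Ω := by
    have hfin' : volume Ω ≠ ⊤ := hΩ.measure_lt_top.ne
    refine le_antisymm ?_ (Measure.restrict_mono
      (subset_inter (subset_toMeasurable _ _) subset_closure) le_rfl)
    calc volume.restrict Ω'
        ≤ volume.restrict (toMeasurable volume Ω) :=
          Measure.restrict_mono inter_subset_left le_rfl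
      _ = volume.restrict Ω := Measure.restrict_toMeasurable hfin'
  have hgΩ' : IntegrableOn g Ω' := by rw [IntegrableOn, hres]; exact hg
  -- the disjointed pieces
  set s : ℕ → Set ℂ := fun n => Ω' ∩ disjointed B' n with hsdef
  have hsmeas : ∀ n, MeasurableSet (s n) := fun n =>
    hΩ'meas.inter (MeasurableSet.disjointed (fun m => (hB'p m).1.measurableSet) n)
  have hsdisj : Pairwise (Function.onFun Disjoint s) := fun m n hmn =>
    ((disjoint_disjointed B') hmn).mono inter_subset_right inter_subset_right
  have hsub' : ∀ n, s n ⊆ B' n := fun n =>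
    inter_subset_right.trans (disjointed_subset B' n)
  have hsV0 : ∀ n, s n ⊆ V0 := fun n => (hsub' n).trans (hB'p n).2.2
  have hsU : ∀ n, s n ⊆ U := fun n => (hsV0 n).trans hV0U
  have hsne : ∀ n, ∀ x ∈ s n, deriv Φ x ≠ 0 := fun n x hx => hV0ne x (hsV0 n hx)
  have hsinj : ∀ n, Set.InjOn Φ (s n) := fun n => ((hB'p n).2.1).mono (hsub' n)
  have hsΩ' : ∀ n, s n ⊆ Ω' := fun n => inter_subset_left
  have hUnionSub : (⋃ n, s n) ⊆ Ω' := iUnion_subset fun n => inter_subset_left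
  have hsd : ∀ n, ∀ x ∈ s n, HasFDerivAt Φ (fdc Φ x) x := by
    intro n x hx
    have hdx : DifferentiableAt ℂ Φ x := hΦ.differentiableAt (hU.mem_nhds (hsU n hx))
    exact (hasDerivAt_iff_hasFDerivAt.1 hdx.hasDerivAt).restrictScalars ℝ
  -- a.e. equality of Ω' and the union
  have hCnull : volume C = 0 := hfin.measure_zero volume
  have hae : Ω' =ᵐ[volume] ⋃ n, s n := by
    rw [MeasureTheory.ae_eq_set]
    constructor
    · refine measure_mono_null ?_ hCnull
      rintro x ⟨hx1, hx2⟩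
      by_contra hxC
      have hxKC : x ∈ K \ C := ⟨hΩ'K hx1, hxC⟩
      have hxB := hB'cov hxKC
      rw [← iUnion_disjointed] at hxB
      obtain ⟨n, hn⟩ := mem_iUnion.1 hxB
      exact hx2 (mem_iUnion.2 ⟨n, hx1, hn⟩)
    · rw [diff_eq_empty.2 hUnionSub]
      exact measure_empty
  -- change of variables data
  set Hf : ℕ → ℂ → ℂ := fun n w =>
    |(fdc Φ (Function.invFunOn Φ (s n) w)).det|⁻¹ • g (Function.invFunOn Φ (s n) w) with hHf
  set A : ℕ → Set ℂ := fun n => Φ '' s n with hA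
  have hAmeas : ∀ n, MeasurableSet (A n) := fun n =>
    (hsmeas n).image_of_continuousOn_injOn (hΦ.continuousOn.mono (hsU n)) (hsinj n)
  have hdet : ∀ n, ∀ x ∈ s n, (fdc Φ x).det ≠ 0 := by
    intro n x hx
    rw [det_fdc]
    exact fun h => hsne n x hx (Complex.normSq_eq_zero.1 h)
  have hleft : ∀ n, ∀ x ∈ s n, Function.invFunOn Φ (s n) (Φ x) = x :=
    fun n x hx => (hsinj n).leftInvOn_invFunOn hx
  have hfdw : ∀ n, ∀ x ∈ s n, HasFDerivWithinAt Φ (fdc Φ x) (s n) x :=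
    fun n x hx => (hsd n x hx).hasFDerivWithinAt
  have eqCoV : ∀ n (τ : ℝ),
      ∫ x in s n, g x * Complex.exp ((τ:ℂ) * (Φ x - (starRingEnd ℂ) (Φ x)))
        = ∫ w in A n, Hf n w * Complex.exp ((τ:ℂ) * (w - (starRingEnd ℂ) w)) := by
    intro n τ
    rw [hA, integral_image_eq_integral_abs_det_fderiv_smul volume (hsmeas n) (hfdw n)
      (hsinj n)]
    refine setIntegral_congr_fun (hsmeas n) fun x hx => ?_
    simp only [hHf, hleft n x hx, smul_mul_assoc]
    rw [smul_smul, mul_inv_cancel₀ (abs_ne_zero.2 (hdet n x hx)), one_smul]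
  set termF : ℕ → ℝ → ℂ := fun n τ =>
    ∫ w in A n, Hf n w * Complex.exp ((τ:ℂ) * (w - (starRingEnd ℂ) w)) with htermF
  -- each term tends to zero
  have hterm : ∀ n, Tendsto (fun τ => termF n τ) atTop (nhds 0) := by
    intro n
    have heq : ∀ τ : ℝ, termF n τ
        = ∫ w, (A n).indicator (Hf n) w * Complex.exp ((τ:ℂ) * (w - (starRingEnd ℂ) w)) := by
      intro τ
      rw [htermF]
      simp only
      rw [← integral_indicator (hAmeas n)]
      congr 1
      ext w
      by_cases hw : w ∈ A n <;> simp [hw]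
    simp only [funext heq]
    exact rl_aux ((A n).indicator (Hf n))
  -- bound
  set bound : ℕ → ℝ := fun n => ∫ x in s n, ‖g x‖ with hbounddef
  have hbdd : ∀ (τ : ℝ) (n : ℕ), ‖termF n τ‖ ≤ bound n := by
    intro τ n
    rw [htermF]
    simp only
    rw [← eqCoV n τ]
    refine (norm_integral_le_integral_norm _).trans (le_of_eq ?_)
    simp only [norm_mul, exp_phase_norm, mul_one, hbounddef]
  have hsummable : Summable bound := by
    have := hasSum_integral_iUnion hsmeas hsdisj (IntegrableOn.mono_set hgΩ'.norm hUnionSub)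
    exact this.summable
  -- the key identity
  have key : ∀ τ : ℝ,
      (∫ x in Ω, g x * Complex.exp ((τ:ℂ) * (Φ x - (starRingEnd ℂ) (Φ x))))
        = ∑' n, termF n τ := by
    intro τ
    have hexpm : AEStronglyMeasurable
        (fun x => Complex.exp ((τ:ℂ) * (Φ x - (starRingEnd ℂ) (Φ x))))
        (volume.restrict Ω') := by
      have hcont : ContinuousOn
          (fun x => Complex.exp ((τ:ℂ) * (Φ x - (starRingEnd ℂ) (Φ x)))) U := by
        apply Complex.continuous_exp.comp_continuousOn
        exact continuousOn_const.mul (hΦ.continuousOn.sub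
          (continuous_star.comp_continuousOn hΦ.continuousOn))
      exact (hcont.aestronglyMeasurable hU.measurableSet).mono_measure
        (Measure.restrict_mono (hΩ'K.trans hsub) le_rfl)
    have hFint : IntegrableOn
        (fun x => g x * Complex.exp ((τ:ℂ) * (Φ x - (starRingEnd ℂ) (Φ x)))) Ω' := by
      have h1 := hgΩ'.bdd_mul hexpm (c := 1) (ae_of_all _ fun x => le_of_eq (exp_phase_norm τ _))
      exact h1.congr (ae_of_all _ fun x => mul_comm _ _)
    calc (∫ x in Ω, g x * Complex.exp ((τ:ℂ) * (Φ x - (starRingEnd ℂ) (Φ x))))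
        = ∫ x in Ω', g x * Complex.exp ((τ:ℂ) * (Φ x - (starRingEnd ℂ) (Φ x))) := by
          rw [← hres]
      _ = ∫ x in ⋃ n, s n, g x * Complex.exp ((τ:ℂ) * (Φ x - (starRingEnd ℂ) (Φ x))) :=
          setIntegral_congr_set hae
      _ = ∑' n, ∫ x in s n, g x * Complex.exp ((τ:ℂ) * (Φ x - (starRingEnd ℂ) (Φ x))) :=
          integral_iUnion hsmeas hsdisj (hFint.mono_set hUnionSub)
      _ = ∑' n, termF n τ := tsum_congr fun n => eqCoV n τ
  have hmain := tendsto_tsum_of_dominated_convergence (f := fun τ n => termF n τ)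
    (g := fun _ => (0:ℂ)) hsummable hterm (Eventually.of_forall fun τ => hbdd τ)
  rw [tsum_zero] at hmain
  exact hmain.congr fun τ => (key τ).symm
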